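/- arXiv:2404.00258 — 4 statements merged into one kernel-verified Lean document; each statement's English description precedes it below -/
import Mathlib

section
/- Let s_f, s_g be real numbers. Let f be C¹ on (s_f,∞) with f(s) > 0 and F(s) := ∫_s^∞ dτ/f(τ) < ∞ for all s > s_f, and let g be C¹ on (s_g,∞) with g(s) > 0 and G(s) := ∫_s^∞ dτ/g(τ) < ∞ for all s > s_g. Let 0 < a < b, let v : (a,b) → (s_g,∞) be twice differentiable and satisfy v''(r) + v'(r)/r + g(v(r)) = 0 for all r ∈ (a,b), and let ũ : (a,b) → (s_f,∞) be twice differentiable and satisfy F(ũ(r)) = G(v(r)) for all r ∈ (a,b). Then for all r ∈ (a,b): ũ''(r) + ũ'(r)/r + f(ũ(r)) + (ũ'(r)² / (f(ũ(r))·F(ũ(r)))) · ( g'(v(r))·G(v(r)) − f'(ũ(r))·F(ũ(r)) ) = 0. -/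
open MeasureTheory Filter

/-- `Fint f s = ∫_s^∞ dτ / f(τ)`. -/
noncomputable def Fint (f : ℝ → ℝ) (s : ℝ) : ℝ := ∫ τ in Set.Ioi s, 1 / f τ



lemma Fint_split (f : ℝ → ℝ) (s_f : ℝ)
    (hfint : ∀ s, s_f < s → IntegrableOn (fun τ => 1 / f τ) (Set.Ioi s))
    {s t : ℝ} (hs : s_f < s) (ht : s ≤ t) :
    Fint f s = (∫ x in s..t, 1 / f x) + Fint f t := by
  have hst : s_f < t := lt_of_lt_of_le hs ht
  have h1 : Set.Ioi s = Set.Ioc s t ∪ Set.Ioi t := (Set.Ioc_union_Ioi_eq_Ioi ht).symm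
  have h2 : (∫ x in Set.Ioi s, 1 / f x) = (∫ x in Set.Ioc s t, 1 / f x) + ∫ x in Set.Ioi t, 1 / f x := by
    rw [h1]
    exact setIntegral_union (Set.Ioc_disjoint_Ioi le_rfl) measurableSet_Ioi
      ((hfint s hs).mono_set Set.Ioc_subset_Ioi_self) (hfint t hst)
  rw [Fint, Fint, h2, intervalIntegral.integral_of_le ht]

lemma Fint_hasDerivAt (f : ℝ → ℝ) (s_f : ℝ)
    (hfc : ContinuousOn (fun τ => 1 / f τ) (Set.Ioi s_f))
    (hfint : ∀ s, s_f < s → IntegrableOn (fun τ => 1 / f τ) (Set.Ioi s))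
    {s : ℝ} (hs : s_f < s) :
    HasDerivAt (Fint f) (-(1 / f s)) s := by
  obtain ⟨c, hc1, hc2⟩ := exists_between hs
  have hev : (fun t => Fint f c - ∫ x in c..t, 1 / f x) =ᶠ[nhds s] Fint f := by
    filter_upwards [isOpen_Ioi.mem_nhds (show s ∈ Set.Ioi c from hc2)] with t ht
    have := Fint_split f s_f hfint hc1 ht.le
    linarith
  have hIoc : IntegrableOn (fun τ => 1 / f τ) (Set.Ioc c s) :=
    (hfint c hc1).mono_set Set.Ioc_subset_Ioi_self
  have hint : IntervalIntegrable (fun τ => 1 / f τ) volume c s := by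
    apply IntegrableOn.intervalIntegrable
    rw [Set.uIcc_of_le hc2.le, integrableOn_Icc_iff_integrableOn_Ioc]
    exact hIoc
  have hmeas : StronglyMeasurableAtFilter (fun τ => 1 / f τ) (nhds s) :=
    ContinuousOn.stronglyMeasurableAtFilter isOpen_Ioi hfc s hs
  have hcont : ContinuousAt (fun τ => 1 / f τ) s :=
    hfc.continuousAt (isOpen_Ioi.mem_nhds hs)
  have h1 : HasDerivAt (fun t => ∫ x in c..t, 1 / f x) (1 / f s) s :=
    intervalIntegral.integral_hasDerivAt_right hint hmeas hcont
  have h2 : HasDerivAt (fun t => Fint f c - ∫ x in c..t, 1 / f x) (-(1 / f s)) s :=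
    (hasDerivAt_const s (Fint f c)).sub h1 |>.congr_deriv (by ring)
  exact h2.congr_of_eventuallyEq hev.symm

lemma Fint_pos (f : ℝ → ℝ) (s_f : ℝ)
    (hfpos : ∀ s, s_f < s → 0 < f s)
    (hfint : ∀ s, s_f < s → IntegrableOn (fun τ => 1 / f τ) (Set.Ioi s))
    {s : ℝ} (hs : s_f < s) : 0 < Fint f s := by
  rw [Fint]
  rw [MeasureTheory.setIntegral_pos_iff_support_of_nonneg_ae]
  · refine lt_of_lt_of_le ?_ (measure_mono (show Set.Ioi s ⊆ _ from ?_))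
    · simp [Real.volume_Ioi]
    · intro x hx
      refine ⟨?_, hx⟩
      simp only [Function.mem_support]
      exact (one_div_pos.mpr (hfpos x (hs.trans hx))).ne'
  · filter_upwards [ae_restrict_mem measurableSet_Ioi] with x hx
    simpa using (one_div_pos.mpr (hfpos x (hs.trans hx))).le
  · exact hfint s hs

/-- Radial form of the transformation identity (equation (2.1a) of the paper):
if `v` solves the radial equation for `g` and `F(ũ) = G(v)`, then `ũ` solves the
perturbed radial equation for `f`. -/
theorem stmt0 (s_f s_g a b : ℝ) (f g v u : ℝ → ℝ)
    (hf : ContDiffOn ℝ 1 f (Set.Ioi s_f))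
    (hfpos : ∀ s, s_f < s → 0 < f s)
    (hfint : ∀ s, s_f < s → IntegrableOn (fun τ => 1 / f τ) (Set.Ioi s))
    (hg : ContDiffOn ℝ 1 g (Set.Ioi s_g))
    (hgpos : ∀ s, s_g < s → 0 < g s)
    (hgint : ∀ s, s_g < s → IntegrableOn (fun τ => 1 / g τ) (Set.Ioi s))
    (ha : 0 < a) (hab : a < b)
    (hvrange : ∀ r ∈ Set.Ioo a b, s_g < v r)
    (hvdiff : ∀ r ∈ Set.Ioo a b, DifferentiableAt ℝ v r ∧ DifferentiableAt ℝ (deriv v) r)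
    (hvode : ∀ r ∈ Set.Ioo a b,
      deriv (deriv v) r + deriv v r / r + g (v r) = 0)
    (hurange : ∀ r ∈ Set.Ioo a b, s_f < u r)
    (hudiff : ∀ r ∈ Set.Ioo a b, DifferentiableAt ℝ u r ∧ DifferentiableAt ℝ (deriv u) r)
    (huF : ∀ r ∈ Set.Ioo a b, Fint f (u r) = Fint g (v r)) :
    ∀ r ∈ Set.Ioo a b,
      deriv (deriv u) r + deriv u r / r + f (u r)
        + (deriv u r) ^ 2 / (f (u r) * Fint f (u r))
          * (deriv g (v r) * Fint g (v r) - deriv f (u r) * Fint f (u r)) = 0 := by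
  have hfc : ContinuousOn (fun τ => 1 / f τ) (Set.Ioi s_f) :=
    continuousOn_const.div hf.continuousOn (fun x hx => (hfpos x hx).ne')
  have hgc : ContinuousOn (fun τ => 1 / g τ) (Set.Ioi s_g) :=
    continuousOn_const.div hg.continuousOn (fun x hx => (hgpos x hx).ne')
  have E1 : ∀ x ∈ Set.Ioo a b, deriv u x / f (u x) = deriv v x / g (v x) := by
    intro x hx
    have hPu : HasDerivAt (fun y => Fint f (u y)) (-(1 / f (u x)) * deriv u x) x :=
      (Fint_hasDerivAt f s_f hfc hfint (hurange x hx)).comp x (hudiff x hx).1.hasDerivAt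
    have hPv : HasDerivAt (fun y => Fint g (v y)) (-(1 / g (v x)) * deriv v x) x :=
      (Fint_hasDerivAt g s_g hgc hgint (hvrange x hx)).comp x (hvdiff x hx).1.hasDerivAt
    have hev : (fun y => Fint f (u y)) =ᶠ[nhds x] fun y => Fint g (v y) := by
      filter_upwards [isOpen_Ioo.mem_nhds hx] with y hy
      exact huF y hy
    have huniq : -(1 / f (u x)) * deriv u x = -(1 / g (v x)) * deriv v x :=
      hPu.unique (hPv.congr_of_eventuallyEq hev)
    have hA : f (u x) ≠ 0 := (hfpos _ (hurange x hx)).ne'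
    have hB : g (v x) ≠ 0 := (hgpos _ (hvrange x hx)).ne'
    field_simp at huniq ⊢
    linarith
  intro r hr
  have hur := hurange r hr
  have hvr := hvrange r hr
  have hfd : HasDerivAt f (deriv f (u r)) (u r) :=
    ((hf.contDiffAt (isOpen_Ioi.mem_nhds hur)).differentiableAt one_ne_zero).hasDerivAt
  have hgd : HasDerivAt g (deriv g (v r)) (v r) :=
    ((hg.contDiffAt (isOpen_Ioi.mem_nhds hvr)).differentiableAt one_ne_zero).hasDerivAt
  have hfu : HasDerivAt (fun x => f (u x)) (deriv f (u r) * deriv u r) r :=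
    hfd.comp r (hudiff r hr).1.hasDerivAt
  have hgv : HasDerivAt (fun x => g (v x)) (deriv g (v r) * deriv v r) r :=
    hgd.comp r (hvdiff r hr).1.hasDerivAt
  have hWu : HasDerivAt (fun x => deriv u x / f (u x))
      ((deriv (deriv u) r * f (u r) - deriv u r * (deriv f (u r) * deriv u r)) / f (u r) ^ 2) r :=
    (hudiff r hr).2.hasDerivAt.div hfu (hfpos _ hur).ne'
  have hWv : HasDerivAt (fun x => deriv v x / g (v x))
      ((deriv (deriv v) r * g (v r) - deriv v r * (deriv g (v r) * deriv v r)) / g (v r) ^ 2) r :=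
    (hvdiff r hr).2.hasDerivAt.div hgv (hgpos _ hvr).ne'
  have hev2 : (fun x => deriv u x / f (u x)) =ᶠ[nhds r] fun x => deriv v x / g (v x) := by
    filter_upwards [isOpen_Ioo.mem_nhds hr] with y hy
    exact E1 y hy
  have E2 : (deriv (deriv u) r * f (u r) - deriv u r * (deriv f (u r) * deriv u r)) / f (u r) ^ 2
      = (deriv (deriv v) r * g (v r) - deriv v r * (deriv g (v r) * deriv v r)) / g (v r) ^ 2 :=
    hWu.unique (hWv.congr_of_eventuallyEq hev2)
  have hGF : Fint g (v r) = Fint f (u r) := (huF r hr).symm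
  rw [hGF]
  have hFpos : 0 < Fint f (u r) := Fint_pos f s_f hfpos hfint hur
  have hA : f (u r) ≠ 0 := (hfpos _ hur).ne'
  have hB : g (v r) ≠ 0 := (hgpos _ hvr).ne'
  have hr0 : r ≠ 0 := (ha.trans hr.1).ne'
  have hF0 : Fint f (u r) ≠ 0 := hFpos.ne'
  have e1 := E1 r hr
  have e3 := hvode r hr
  have e3' : deriv (deriv v) r * r + deriv v r + g (v r) * r = 0 := by
    field_simp at e3
    linarith
  field_simp at e1 E2 ⊢
  refine mul_right_cancel₀ (pow_ne_zero 2 hB) ?_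
  rw [mul_zero, zero_mul]
  linear_combination r * E2 + (f (u r)^2 * g (v r)) * e3'
    + ((f (u r) * g (v r)
        + r * deriv g (v r) * (deriv u r * g (v r) + deriv v r * f (u r)))) * e1
end

section
/- Let q > 1. For all r ∈ (0,1), the function v(r) := (−2 log r)^{1/q} satisfies v''(r) + v'(r)/r + (4(q−1)/q²) · v(r)^{1−2q} · e^{v(r)^q} = 0, and the function w(r) := log(−2 log r) satisfies w''(r) + w'(r)/r + 4·e^{e^{w(r)} − 2 w(r)} = 0. -/
open Real Set Filter

/-- Explicit singular solutions of the model equations in two dimensions: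
`v(r) = (−2 log r)^{1/q}` solves `v'' + v'/r + (4(q−1)/q²) v^{1−2q} e^{v^q} = 0`, and
`w(r) = log(−2 log r)` solves `w'' + w'/r + 4 e^{e^w − 2w} = 0`, for `r ∈ (0,1)`. -/
theorem stmt1 (q : ℝ) (hq : 1 < q) :
    ∀ r ∈ Set.Ioo (0 : ℝ) 1,
      (deriv (deriv (fun t : ℝ => (-2 * Real.log t) ^ (1 / q))) r
        + deriv (fun t : ℝ => (-2 * Real.log t) ^ (1 / q)) r / r
        + (4 * (q - 1) / q ^ 2) * ((-2 * Real.log r) ^ (1 / q)) ^ (1 - 2 * q)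
          * Real.exp (((-2 * Real.log r) ^ (1 / q)) ^ q) = 0)
      ∧ (deriv (deriv (fun t : ℝ => Real.log (-2 * Real.log t))) r
        + deriv (fun t : ℝ => Real.log (-2 * Real.log t)) r / r
        + 4 * Real.exp (Real.exp (Real.log (-2 * Real.log r))
            - 2 * Real.log (-2 * Real.log r)) = 0) := by
  intro r hr
  obtain ⟨hr0, hr1⟩ := hr
  have hlog : Real.log r < 0 := Real.log_neg hr0 hr1
  have hL : 0 < -2 * Real.log r := by nlinarith
  have hq0 : q ≠ 0 := by linarith
  have hmem : Set.Ioo (0:ℝ) 1 ∈ nhds r := Ioo_mem_nhds hr0 hr1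
  have hLt : ∀ t ∈ Set.Ioo (0:ℝ) 1, 0 < -2 * Real.log t := by
    intro t ht
    have := Real.log_neg ht.1 ht.2
    nlinarith
  have hlog' : ∀ t ∈ Set.Ioo (0:ℝ) 1, HasDerivAt (fun t : ℝ => -2 * Real.log t) (-2 * t⁻¹) t :=
    fun t ht => (Real.hasDerivAt_log ht.1.ne').const_mul (-2)
  -- exp(-2 log r) = (r*r)⁻¹
  have hexp : Real.exp (-2 * Real.log r) = (r * r)⁻¹ := by
    rw [show -2 * Real.log r = -(Real.log r + Real.log r) by ring, Real.exp_neg, Real.exp_add,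
      Real.exp_log hr0]
  constructor
  · -- v part
    have hv' : ∀ t ∈ Set.Ioo (0:ℝ) 1, HasDerivAt (fun t : ℝ => (-2 * Real.log t) ^ (1 / q))
        ((1/q) * (-2 * Real.log t) ^ (1/q - 1) * (-2 * t⁻¹)) t := by
      intro t ht
      have := (hlog' t ht).rpow_const (p := 1/q) (Or.inl (hLt t ht).ne')
      convert this using 1
      ring
    have hfeq : deriv (fun t : ℝ => (-2 * Real.log t) ^ (1 / q))
        =ᶠ[nhds r] fun t => (1/q) * (-2 * Real.log t) ^ (1/q - 1) * (-2 * t⁻¹) :=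
      eventually_of_mem hmem (fun t ht => (hv' t ht).deriv)
    have h1 : HasDerivAt (fun t : ℝ => (-2 * Real.log t) ^ (1/q - 1))
        ((1/q - 1) * (-2 * Real.log r) ^ (1/q - 1 - 1) * (-2 * r⁻¹)) r := by
      have := (hlog' r ⟨hr0, hr1⟩).rpow_const (p := 1/q - 1) (Or.inl hL.ne')
      convert this using 1
      ring
    have h2 := h1.const_mul (1/q)
    have h3 : HasDerivAt (fun t : ℝ => -2 * t⁻¹) (-2 * (-(r^2)⁻¹)) r :=
      (hasDerivAt_inv hr0.ne').const_mul (-2)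
    have hg := h2.mul h3
    have hderiv2 : deriv (deriv (fun t : ℝ => (-2 * Real.log t) ^ (1 / q))) r
        = (1/q) * ((1/q - 1) * (-2 * Real.log r) ^ (1/q - 1 - 1) * (-2 * r⁻¹)) * (-2 * r⁻¹)
          + (1/q) * (-2 * Real.log r) ^ (1/q - 1) * (-2 * (-(r^2)⁻¹)) := by
      rw [hfeq.deriv_eq]; exact hg.deriv
    rw [hderiv2, (hv' r ⟨hr0, hr1⟩).deriv]
    -- rpow identities
    have hp1 : ((-2 * Real.log r) ^ (1/q)) ^ q = -2 * Real.log r := by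
      rw [← Real.rpow_mul hL.le, show (1/q) * q = (1:ℝ) by field_simp, Real.rpow_one]
    have hp2 : ((-2 * Real.log r) ^ (1/q)) ^ (1 - 2*q) = (-2 * Real.log r) ^ (1/q - 2) := by
      rw [← Real.rpow_mul hL.le, show (1/q) * (1 - 2*q) = 1/q - 2 by field_simp]
    have hp3 : (-2 * Real.log r) ^ (1/q - 1)
        = (-2 * Real.log r) ^ (1/q - 2) * (-2 * Real.log r) := by
      rw [show (1/q - 1 : ℝ) = (1/q - 2) + 1 by ring, Real.rpow_add_one hL.ne']
    have hp4 : (-2 * Real.log r) ^ (1/q - 1 - 1) = (-2 * Real.log r) ^ (1/q - 2) := by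
      rw [show (1/q - 1 - 1 : ℝ) = 1/q - 2 by ring]
    rw [hp1, hp2, hp4, hp3, hexp]
    have hrne : r ≠ 0 := hr0.ne'
    field_simp
    ring
  · -- w part
    have hw' : ∀ t ∈ Set.Ioo (0:ℝ) 1, HasDerivAt (fun t : ℝ => Real.log (-2 * Real.log t))
        ((-2 * t⁻¹) / (-2 * Real.log t)) t := by
      intro t ht
      exact (hlog' t ht).log (hLt t ht).ne'
    have hfeq : deriv (fun t : ℝ => Real.log (-2 * Real.log t))
        =ᶠ[nhds r] fun t => (-2 * t⁻¹) / (-2 * Real.log t) :=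
      eventually_of_mem hmem (fun t ht => (hw' t ht).deriv)
    have hc : HasDerivAt (fun t : ℝ => -2 * t⁻¹) (-2 * (-(r^2)⁻¹)) r :=
      (hasDerivAt_inv hr0.ne').const_mul (-2)
    have hg := hc.div (hlog' r ⟨hr0, hr1⟩) hL.ne'
    have hderiv2 : deriv (deriv (fun t : ℝ => Real.log (-2 * Real.log t))) r
        = ((-2 * (-(r^2)⁻¹)) * (-2 * Real.log r) - (-2 * r⁻¹) * (-2 * r⁻¹))
          / (-2 * Real.log r) ^ 2 := by
      rw [hfeq.deriv_eq]; exact hg.deriv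
    have hexp2 : Real.exp (Real.exp (Real.log (-2 * Real.log r))
        - 2 * Real.log (-2 * Real.log r))
        = (r * r)⁻¹ * ((-2 * Real.log r) * (-2 * Real.log r))⁻¹ := by
      rw [Real.exp_log hL, show -2 * Real.log r - 2 * Real.log (-2 * Real.log r)
          = -2 * Real.log r + -(Real.log (-2 * Real.log r) + Real.log (-2 * Real.log r)) by ring,
        Real.exp_add, Real.exp_neg, Real.exp_add, Real.exp_log hL, hexp]
    rw [hderiv2, (hw' r ⟨hr0, hr1⟩).deriv, hexp2]
    have hrne : r ≠ 0 := hr0.ne'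
    have hlogne : Real.log r ≠ 0 := hlog.ne
    field_simp
    ring
end

section
/- Assume f satisfies (f1) and (f2) with constant B ∈ [1,∞). Then: (i) 1/B₁[f](s) → 1/B as s → ∞; (ii) there exists s₁ > s₀ such that f'(s)·F(s) ≤ 1 for all s ≥ s₁, and consequently the function s ↦ f(s)·F(s) is non-increasing on [s₁,∞); moreover f'(s)·F(s) → 1 as s → ∞. -/
open MeasureTheory Filter Topology

/-- `1/B₁[f](s) = (−log F(s))·(1 − f'(s)·F(s))`, with `G` playing the role of `F`. -/
noncomputable def invB1 (f G : ℝ → ℝ) (s : ℝ) : ℝ :=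
  (-Real.log (G s)) * (1 - deriv f s * G s)

/-- `1/B₂[f](s) = f'(s)·F(s)·(log F(s))²·(f(s)·f''(s)·F(s)/f'(s) − 1)`,
with `G` playing the role of `F`. -/
noncomputable def invB2 (f G : ℝ → ℝ) (s : ℝ) : ℝ :=
  deriv f s * G s * (Real.log (G s)) ^ 2 *
    (f s * deriv (deriv f) s * G s / deriv f s - 1)

/-- The model singular solution `v`. -/
noncomputable def modelv (B t : ℝ) : ℝ :=
  if B = 1 then Real.log (-2 * Real.log t) else (-2 * Real.log t) ^ ((B - 1) / B)

/-- The model nonlinearity `g`. -/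
noncomputable def modelg (B s : ℝ) : ℝ :=
  if B = 1 then 4 * Real.exp (Real.exp s - 2 * s)
  else (4 / (B * (B / (B - 1)))) * s ^ (1 - 2 * (B / (B - 1))) * Real.exp (s ^ (B / (B - 1)))

/-- The model function `G(s) = ∫_s^∞ dτ/g(τ)` in closed form. -/
noncomputable def modelG (B s : ℝ) : ℝ :=
  if B = 1 then (1 / 4) * (Real.exp s + 1) * Real.exp (-Real.exp s)
  else (B / 4) * (s ^ (B / (B - 1)) + 1) * Real.exp (-(s ^ (B / (B - 1))))

/-- The Emden–Fowler model profile `ψ`. -/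
noncomputable def modelpsi (B ρ : ℝ) : ℝ :=
  if B = 1 then Real.log (ρ - 1) else (ρ - 1) ^ ((B - 1) / B)

/-- Remark 1.3: under (f1), (f2), `1/B₁[f](s) → 1/B`, eventually `f'(s)F(s) ≤ 1`
(so `f·F` is non-increasing there), and `f'(s)F(s) → 1` as `s → ∞`. -/
theorem stmt2 (f : ℝ → ℝ) (s₀ B : ℝ) (hs₀ : 0 < s₀)
    (hf : ContDiffOn ℝ 2 f (Set.Ioi s₀))
    (hfpos : ∀ s, s₀ < s → 0 < f s)
    (hf' : ∀ s, s₀ < s → 0 < deriv f s)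
    (hfint : ∀ s, s₀ < s → IntegrableOn (fun τ => 1 / f τ) (Set.Ioi s))
    (hB : 1 ≤ B)
    (hf2a : Tendsto (fun s => deriv f s * Fint f s) atTop (nhds 1))
    (hf2b : Tendsto (fun s => invB2 f (Fint f) s) atTop (nhds (1 / B))) :
    Tendsto (fun s => invB1 f (Fint f) s) atTop (nhds (1 / B))
    ∧ (∃ s₁ > s₀, (∀ s ≥ s₁, deriv f s * Fint f s ≤ 1)
        ∧ AntitoneOn (fun s => f s * Fint f s) (Set.Ici s₁))
    ∧ Tendsto (fun s => deriv f s * Fint f s) atTop (nhds 1) := by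
  have hfc : ContinuousOn f (Set.Ioi s₀) := hf.continuousOn
  have hinvc : ContinuousOn (fun τ => 1 / f τ) (Set.Ioi s₀) :=
    continuousOn_const.div hfc (fun x hx => (hfpos x hx).ne')
  have hfd : ∀ s, s₀ < s → HasDerivAt f (deriv f s) s := fun s hs =>
    ((hf.differentiableOn two_ne_zero).differentiableAt (Ioi_mem_nhds hs)).hasDerivAt
  have hf''d : ∀ s, s₀ < s → HasDerivAt (deriv f) (deriv (deriv f) s) s := by
    intro s hs
    have h1 : ContDiffOn ℝ 1 (deriv f) (Set.Ioi s₀) :=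
      hf.deriv_of_isOpen isOpen_Ioi (by norm_num)
    exact ((h1.differentiableOn one_ne_zero).differentiableAt (Ioi_mem_nhds hs)).hasDerivAt
  -- splitting of the improper integral
  have hsplit : ∀ a t : ℝ, s₀ < a → a < t →
      Fint f a = (∫ τ in Set.Ioc a t, 1 / f τ) + Fint f t := by
    intro a t ha hat
    have h1 : IntegrableOn (fun τ => 1 / f τ) (Set.Ioc a t) :=
      (hfint a ha).mono_set Set.Ioc_subset_Ioi_self
    have h2 : IntegrableOn (fun τ => 1 / f τ) (Set.Ioi t) := hfint t (ha.trans hat)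
    rw [Fint, Fint, ← Set.Ioc_union_Ioi_eq_Ioi hat.le,
      setIntegral_union (Set.Ioc_disjoint_Ioi le_rfl) measurableSet_Ioi h1 h2]
  -- derivative of Fint
  have hFd : ∀ s, s₀ < s → HasDerivAt (Fint f) (-(1 / f s)) s := by
    intro s hs
    set a := (s₀ + s) / 2 with ha_def
    have ha1 : s₀ < a := by rw [ha_def]; linarith
    have ha2 : a < s := by rw [ha_def]; linarith
    have hii : IntervalIntegrable (fun τ => 1 / f τ) volume a s :=
      (intervalIntegrable_iff_integrableOn_Ioc_of_le ha2.le).mpr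
        ((hfint a ha1).mono_set Set.Ioc_subset_Ioi_self)
    have hmeas : StronglyMeasurableAtFilter (fun τ => 1 / f τ) (𝓝 s) :=
      ContinuousOn.stronglyMeasurableAtFilter isOpen_Ioi hinvc s hs
    have hca : ContinuousAt (fun τ => 1 / f τ) s := hinvc.continuousAt (Ioi_mem_nhds hs)
    have hd : HasDerivAt (fun t => Fint f a - ∫ τ in a..t, 1 / f τ) (-(1 / f s)) s := by
      simpa using (intervalIntegral.integral_hasDerivAt_right hii hmeas hca).const_sub (Fint f a)
    apply hd.congr_of_eventuallyEq
    filter_upwards [Ioi_mem_nhds ha2] with t ht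
    rw [intervalIntegral.integral_of_le (le_of_lt ht), hsplit a t ha1 ht]
    ring
  -- positivity of Fint
  have hFpos : ∀ s, s₀ < s → 0 < Fint f s := by
    intro s hs
    rw [Fint, setIntegral_pos_iff_support_of_nonneg_ae]
    · have hsub : Set.Ioi s ⊆ (Function.support fun τ => 1 / f τ) ∩ Set.Ioi s :=
        fun τ hτ => ⟨one_div_ne_zero (hfpos τ (hs.trans hτ)).ne', hτ⟩
      refine lt_of_lt_of_le ?_ (measure_mono hsub)
      rw [Real.volume_Ioi]
      exact ENNReal.zero_lt_top
    · refine (ae_restrict_iff' measurableSet_Ioi).mpr (ae_of_all _ fun τ hτ => ?_)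
      exact le_of_lt (one_div_pos.mpr (hfpos τ (hs.trans hτ)))
    · exact hfint s hs
  -- Fint tends to 0
  have hF0 : Tendsto (Fint f) atTop (𝓝 0) := by
    have ha : s₀ < s₀ + 1 := by linarith
    have h1 : Tendsto (fun t => ∫ τ in (s₀ + 1)..t, 1 / f τ) atTop (𝓝 (Fint f (s₀ + 1))) :=
      intervalIntegral_tendsto_integral_Ioi (s₀ + 1) (hfint (s₀ + 1) ha) tendsto_id
    have h2 : Tendsto (fun t => Fint f (s₀ + 1) - ∫ τ in (s₀ + 1)..t, 1 / f τ) atTop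
        (𝓝 (Fint f (s₀ + 1) - Fint f (s₀ + 1))) := h1.const_sub _
    rw [sub_self] at h2
    apply h2.congr'
    filter_upwards [eventually_gt_atTop (s₀ + 1)] with t ht
    rw [intervalIntegral.integral_of_le ht.le, hsplit (s₀ + 1) t ha ht]
    ring
  have hev₀ : ∀ᶠ s in atTop, s₀ < s := eventually_gt_atTop s₀
  have hevF1 : ∀ᶠ s in atTop, Fint f s < 1 := hF0.eventually_lt_const one_pos
  have hevL : ∀ᶠ s in atTop, Real.log (Fint f s) < 0 := by
    filter_upwards [hev₀, hevF1] with s h0 h1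
    exact Real.log_neg (hFpos s h0) h1
  have hFn : Tendsto (Fint f) atTop (𝓝[>] 0) := by
    rw [tendsto_nhdsWithin_iff]
    exact ⟨hF0, hev₀.mono fun s hs => hFpos s hs⟩
  have hLbot : Tendsto (fun s => Real.log (Fint f s)) atTop atBot :=
    Real.tendsto_log_nhdsGT_zero.comp hFn
  have hnegLtop : Tendsto (fun s => -Real.log (Fint f s)) atTop atTop :=
    tendsto_neg_atBot_atTop.comp hLbot
  -- L'Hopital setup
  set N : ℝ → ℝ := fun s => 1 - deriv f s * Fint f s with hNdef
  set D : ℝ → ℝ := fun s => (-Real.log (Fint f s))⁻¹ with hDdef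
  set N' : ℝ → ℝ := fun s => -(deriv (deriv f) s * Fint f s + deriv f s * -(1 / f s)) with hN'def
  set D' : ℝ → ℝ := fun s => -((1 / f s / Fint f s) / Real.log (Fint f s) ^ 2) with hD'def
  have hNto : Tendsto N atTop (𝓝 0) := by
    have h := hf2a.const_sub 1
    rw [sub_self] at h
    exact h
  have hDto : Tendsto D atTop (𝓝 0) := tendsto_inv_atTop_zero.comp hnegLtop
  have hNd : ∀ᶠ s in atTop, HasDerivAt N (N' s) s := by
    filter_upwards [hev₀] with s hs
    exact ((hf''d s hs).mul (hFd s hs)).const_sub 1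
  have hDd : ∀ᶠ s in atTop, HasDerivAt D (D' s) s := by
    filter_upwards [hev₀, hevL] with s hs hL
    have hne : -Real.log (Fint f s) ≠ 0 := neg_ne_zero.mpr hL.ne
    have := (((hFd s hs).log (hFpos s hs).ne').neg).inv hne
    refine this.congr_deriv ?_
    rw [hD'def]
    field_simp
    simp only [Pi.neg_apply, neg_sq]
  have hD'ne : ∀ᶠ s in atTop, D' s ≠ 0 := by
    filter_upwards [hev₀, hevL] with s hs hL
    have h1 : 0 < 1 / f s := one_div_pos.mpr (hfpos s hs)
    have h2 : 0 < Fint f s := hFpos s hs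
    have h3 : Real.log (Fint f s) ≠ 0 := hL.ne
    rw [hD'def]
    simp only [neg_ne_zero]
    positivity
  have hdiv : Tendsto (fun s => N' s / D' s) atTop (𝓝 (1 / B)) := by
    apply hf2b.congr'
    filter_upwards [hev₀, hevL, hD'ne] with s hs hL hDne
    have hx : f s ≠ 0 := (hfpos s hs).ne'
    have hy : deriv f s ≠ 0 := (hf' s hs).ne'
    have hF : Fint f s ≠ 0 := (hFpos s hs).ne'
    have hLne : Real.log (Fint f s) ≠ 0 := hL.ne
    rw [eq_div_iff hDne, invB2, hN'def, hD'def]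
    field_simp
    ring
  have hlh : Tendsto (fun s => N s / D s) atTop (𝓝 (1 / B)) :=
    HasDerivAt.lhopital_zero_atTop hNd hDd hD'ne hNto hDto hdiv
  have part1 : Tendsto (fun s => invB1 f (Fint f) s) atTop (𝓝 (1 / B)) := by
    apply hlh.congr
    intro s
    rw [invB1, hNdef, hDdef, div_inv_eq_mul]
    ring
  -- part (ii)
  have hevB2 : ∀ᶠ s in atTop, 0 < invB2 f (Fint f) s :=
    hf2b.eventually_const_lt (one_div_pos.mpr (lt_of_lt_of_le one_pos hB))
  obtain ⟨s₁', hs₁'⟩ := (hev₀.and (hevL.and hevB2)).exists_forall_of_atTop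
  set s₁ : ℝ := max s₁' (s₀ + 1) with hs₁def
  have hs₁gt : s₀ < s₁ := lt_of_lt_of_le (by linarith) (le_max_right _ _)
  have hkey : ∀ s, s₁ ≤ s → s₀ < s ∧ Real.log (Fint f s) < 0 ∧ 0 < invB2 f (Fint f) s :=
    fun s hs => hs₁' s (le_trans (le_max_left _ _) hs)
  -- positivity of the derivative of h = f' · F on [s₁, ∞)
  have hh' : ∀ s, s₁ ≤ s → 0 < deriv (deriv f) s * Fint f s + deriv f s * -(1 / f s) := by
    intro s hs
    obtain ⟨h0, hL, hb2⟩ := hkey s hs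
    have hx : 0 < f s := hfpos s h0
    have hy : 0 < deriv f s := hf' s h0
    have hF : 0 < Fint f s := hFpos s h0
    have hA : 0 < deriv f s * Fint f s * Real.log (Fint f s) ^ 2 :=
      mul_pos (mul_pos hy hF) (pow_two_pos_of_ne_zero hL.ne)
    have hbr : 0 < f s * deriv (deriv f) s * Fint f s / deriv f s - 1 := by
      have := hb2
      rw [invB2] at this
      exact (mul_pos_iff_of_pos_left hA).mp this
    have hlt : deriv f s < f s * deriv (deriv f) s * Fint f s := by
      have h1 : 1 < f s * deriv (deriv f) s * Fint f s / deriv f s := by linarith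
      calc deriv f s = 1 * deriv f s := (one_mul _).symm
        _ < (f s * deriv (deriv f) s * Fint f s / deriv f s) * deriv f s := by
            exact mul_lt_mul_of_pos_right h1 hy
        _ = f s * deriv (deriv f) s * Fint f s := by field_simp
    have heq : deriv (deriv f) s * Fint f s + deriv f s * -(1 / f s)
        = (f s * deriv (deriv f) s * Fint f s - deriv f s) / f s := by
      field_simp
      ring
    rw [heq]
    exact div_pos (by linarith) hx
  have hmono : StrictMonoOn (fun s => deriv f s * Fint f s) (Set.Ici s₁) := by
    apply strictMonoOn_of_deriv_pos (convex_Ici s₁)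
    · intro s hs
      have h0 : s₀ < s := lt_of_lt_of_le hs₁gt hs
      exact ((hf''d s h0).mul (hFd s h0)).continuousAt.continuousWithinAt
    · intro s hs
      rw [interior_Ici] at hs
      have h0 : s₀ < s := lt_of_lt_of_le hs₁gt (le_of_lt hs)
      rw [HasDerivAt.deriv (f := fun s => deriv f s * Fint f s) ((hf''d s h0).mul (hFd s h0))]
      exact hh' s (le_of_lt hs)
  have hle1 : ∀ s ≥ s₁, deriv f s * Fint f s ≤ 1 := by
    intro s hs
    refine ge_of_tendsto hf2a ?_
    filter_upwards [eventually_ge_atTop s] with t ht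
    exact hmono.monotoneOn hs (le_trans hs ht) ht
  have hanti : AntitoneOn (fun s => f s * Fint f s) (Set.Ici s₁) := by
    apply antitoneOn_of_deriv_nonpos (convex_Ici s₁)
    · intro s hs
      have h0 : s₀ < s := lt_of_lt_of_le hs₁gt hs
      exact ((hfd s h0).mul (hFd s h0)).continuousAt.continuousWithinAt
    · intro s hs
      rw [interior_Ici] at hs
      have h0 : s₀ < s := lt_of_lt_of_le hs₁gt (le_of_lt hs)
      exact ((hfd s h0).mul (hFd s h0)).differentiableAt.differentiableWithinAt
    · intro s hs
      rw [interior_Ici] at hs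
      have h0 : s₀ < s := lt_of_lt_of_le hs₁gt (le_of_lt hs)
      rw [HasDerivAt.deriv (f := fun s => f s * Fint f s) ((hfd s h0).mul (hFd s h0))]
      have hx : f s ≠ 0 := (hfpos s h0).ne'
      have heq : f s * -(1 / f s) = -1 := by field_simp
      rw [heq]
      have := hle1 s (le_of_lt hs)
      linarith
  exact ⟨part1, ⟨s₁, hs₁gt, hle1, hanti⟩, hf2a⟩
end

section
/- Let a satisfy the hypotheses (A). Then, with f(s) := e^{a(s)} and F(s) := ∫_s^∞ e^{−a(t)} dt: (i) ( F(s)·e^{a(s)} − a₁(s) − a₂(s) − a₃(s) ) / a₄(s) → 1 as s → ∞; (ii) there exist C > 0 and s₂ > 0 such that for all s ≥ s₂: | log F(s) + a(s) + log a'(s) | ≤ C · |a''(s)| / a'(s)². -/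
open MeasureTheory Filter

/-- `aseq a n` is the function `a_{n+1}` of the paper: `a₁ = 1/a'` and
`a_{n+1} = a_n'/a'`, so `aseq a 0 = a₁, …, aseq a 4 = a₅`. -/
noncomputable def aseq (a : ℝ → ℝ) : ℕ → ℝ → ℝ
  | 0 => fun s => 1 / deriv a s
  | n + 1 => fun s => deriv (aseq a n) s / deriv a s

open Set

theorem abs_log_one_add_le {y : ℝ} (h : |y| ≤ 1/2) : |Real.log (1 + y)| ≤ 2 * |y| := by
  obtain ⟨hl, hr⟩ := abs_le.1 h
  have h1y : (0:ℝ) < 1 + y := by linarith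
  rw [abs_le]
  constructor
  · have hinv := Real.log_le_sub_one_of_pos (inv_pos.2 h1y)
    rw [Real.log_inv] at hinv
    have hmul : (1 + y) * (1 + y)⁻¹ = 1 := mul_inv_cancel₀ (ne_of_gt h1y)
    have hinvpos : 0 < (1 + y)⁻¹ := inv_pos.2 h1y
    have hbig : (1 + y)⁻¹ - 1 ≤ 2 * |y| := by
      nlinarith [neg_abs_le y, le_abs_self y, abs_nonneg y]
    linarith
  · have := Real.log_le_sub_one_of_pos h1y
    have h2 := le_abs_self y
    have h3 := abs_nonneg y
    linarith

/-- Lemma 3.1, parts (3.2) and (3.5c): asymptotic expansion of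
`F(s) = ∫_s^∞ e^{−a(t)} dt` and of `log F(s)` under hypotheses (A). -/
theorem stmt12 (a : ℝ → ℝ)
    (ha : ContDiffOn ℝ 5 a (Set.Ioi 0))
    (hatop : Tendsto a atTop atTop)
    (ha'top : Tendsto (deriv a) atTop atTop)
    (hdecay : ∀ n < 4, Tendsto (fun s => aseq a n s * Real.exp (-(a s))) atTop (nhds 0))
    (hint : ∀ n < 4, ∀ s > (0 : ℝ),
      IntegrableOn (fun t => |deriv (aseq a n) t| * Real.exp (-(a t))) (Set.Ioi s))
    (hne : ∀ n < 4, ∃ s₁ > (0 : ℝ), ∀ s ≥ s₁, aseq a n s ≠ 0)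
    (hratio : ∀ n < 4, Tendsto (fun s => aseq a (n + 1) s / aseq a n s) atTop (nhds 0)) :
    Tendsto (fun s => ((∫ t in Set.Ioi s, Real.exp (-(a t))) * Real.exp (a s)
        - aseq a 0 s - aseq a 1 s - aseq a 2 s) / aseq a 3 s) atTop (nhds 1)
    ∧ ∃ C > (0 : ℝ), ∃ s₂ > (0 : ℝ), ∀ s ≥ s₂,
        |Real.log (∫ t in Set.Ioi s, Real.exp (-(a t))) + a s + Real.log (deriv a s)|
          ≤ C * |deriv (deriv a) s| / (deriv a s) ^ 2 := by
  -- threshold where deriv a ≥ 1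
  obtain ⟨S', hS'⟩ := eventually_atTop.1 (ha'top.eventually_ge_atTop 1)
  set S₀ : ℝ := max S' 1 with hS₀def
  have hS₀pos : (0:ℝ) < S₀ := lt_of_lt_of_le one_pos (le_max_right _ _)
  have hU : Ioi S₀ ⊆ Ioi (0:ℝ) := fun x hx => lt_trans hS₀pos hx
  have ha'ge : ∀ s ∈ Ioi S₀, 1 ≤ deriv a s := fun s hs =>
    hS' s (le_trans (le_max_left _ _) (le_of_lt hs))
  have ha'pos : ∀ s ∈ Ioi S₀, 0 < deriv a s := fun s hs =>
    lt_of_lt_of_le one_pos (ha'ge s hs)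
  have ha'ne : ∀ s ∈ Ioi S₀, deriv a s ≠ 0 := fun s hs => ne_of_gt (ha'pos s hs)
  -- smoothness
  have hd : ContDiffOn ℝ 4 (deriv a) (Set.Ioi 0) :=
    ha.deriv_of_isOpen isOpen_Ioi (by norm_num)
  have hdU : ContDiffOn ℝ 4 (deriv a) (Ioi S₀) := hd.mono hU
  have ca0 : ContDiffOn ℝ 4 (aseq a 0) (Ioi S₀) := by
    show ContDiffOn ℝ 4 (fun s => 1 / deriv a s) (Ioi S₀)
    exact contDiffOn_const.div hdU ha'ne
  have ca1 : ContDiffOn ℝ 3 (aseq a 1) (Ioi S₀) := by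
    show ContDiffOn ℝ 3 (fun s => deriv (aseq a 0) s / deriv a s) (Ioi S₀)
    exact (ca0.deriv_of_isOpen isOpen_Ioi (by norm_num)).div (hdU.of_le (by norm_num)) ha'ne
  have ca2 : ContDiffOn ℝ 2 (aseq a 2) (Ioi S₀) := by
    show ContDiffOn ℝ 2 (fun s => deriv (aseq a 1) s / deriv a s) (Ioi S₀)
    exact (ca1.deriv_of_isOpen isOpen_Ioi (by norm_num)).div (hdU.of_le (by norm_num)) ha'ne
  have ca3 : ContDiffOn ℝ 1 (aseq a 3) (Ioi S₀) := by
    show ContDiffOn ℝ 1 (fun s => deriv (aseq a 2) s / deriv a s) (Ioi S₀)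
    exact (ca2.deriv_of_isOpen isOpen_Ioi (by norm_num)).div (hdU.of_le (by norm_num)) ha'ne
  have caN : ∀ n ≤ 3, ContDiffOn ℝ 1 (aseq a n) (Ioi S₀) := by
    intro n hn
    interval_cases n
    · exact ca0.of_le (by norm_num)
    · exact ca1.of_le (by norm_num)
    · exact ca2.of_le (by norm_num)
    · exact ca3
  -- differentiability and continuity of derivatives
  have da : ∀ n ≤ 3, ∀ s ∈ Ioi S₀, DifferentiableAt ℝ (aseq a n) s := by
    intro n hn s hs
    exact (((caN n hn).differentiableOn one_ne_zero).differentiableAt (isOpen_Ioi.mem_nhds hs))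
  have cder : ∀ n ≤ 3, ContinuousOn (deriv (aseq a n)) (Ioi S₀) := by
    intro n hn
    exact ((caN n hn).deriv_of_isOpen isOpen_Ioi (show (0:WithTop ℕ∞)+1 ≤ 1 by norm_num)).continuousOn
  have daA : ∀ s ∈ Ioi S₀, DifferentiableAt ℝ a s := fun s hs =>
    ((ha.differentiableOn (by norm_num)).differentiableAt
      (isOpen_Ioi.mem_nhds (hU hs)))
  have daA' : ∀ s ∈ Ioi S₀, DifferentiableAt ℝ (deriv a) s := fun s hs =>
    ((hd.differentiableOn (by norm_num)).differentiableAt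
      (isOpen_Ioi.mem_nhds (hU hs)))
  have contA : ContinuousOn a (Ioi S₀) := fun s hs => (daA s hs).continuousAt.continuousWithinAt
  -- pointwise multiplication identities
  have hmul0 : ∀ s ∈ Ioi S₀, aseq a 0 s * deriv a s = 1 := by
    intro s hs
    show 1 / deriv a s * deriv a s = 1
    field_simp [ha'ne s hs]
  have hmulS : ∀ n, ∀ s ∈ Ioi S₀, aseq a (n+1) s * deriv a s = deriv (aseq a n) s := by
    intro n s hs
    show deriv (aseq a n) s / deriv a s * deriv a s = deriv (aseq a n) s
    exact div_mul_cancel₀ _ (ha'ne s hs)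
  -- derivative of aseq n * exp (-a)
  have hprod : ∀ n ≤ 3, ∀ s ∈ Ioi S₀,
      HasDerivAt (fun t => aseq a n t * Real.exp (-(a t)))
        ((deriv (aseq a n) s - aseq a n s * deriv a s) * Real.exp (-(a s))) s := by
    intro n hn s hs
    have h1 : HasDerivAt (aseq a n) (deriv (aseq a n) s) s := (da n hn s hs).hasDerivAt
    have h2 : HasDerivAt (fun t => Real.exp (-(a t)))
        (Real.exp (-(a s)) * -(deriv a s)) s := ((daA s hs).hasDerivAt.neg).exp
    have := h1.mul h2
    exact this.congr_deriv (by ring)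
  -- integrability of exp(-a)
  have intExp : ∀ s ∈ Ioi S₀, IntegrableOn (fun t => Real.exp (-(a t))) (Ioi s) := by
    intro s hs
    have hmono : ∀ t ∈ Ici s, a s - s ≤ a t - t := by
      have hmo : MonotoneOn (fun t => a t - t) (Ici s) := by
        refine monotoneOn_of_deriv_nonneg (convex_Ici s) ?_ ?_ ?_
        · intro x hx
          have hx' : x ∈ Ioi S₀ := Set.mem_Ioi.2 (lt_of_lt_of_le hs hx)
          exact ((daA x hx').sub differentiableAt_id).continuousAt.continuousWithinAt
        · intro x hx
          rw [interior_Ici] at hx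
          have hx' : x ∈ Ioi S₀ := Set.mem_Ioi.2 (lt_trans hs hx)
          exact ((daA x hx').sub differentiableAt_id).differentiableWithinAt
        · intro x hx
          rw [interior_Ici] at hx
          have hx' : x ∈ Ioi S₀ := Set.mem_Ioi.2 (lt_trans hs hx)
          have h1 := ha'ge x hx'
          have h2 : deriv (fun t => a t - t) x = deriv a x - 1 := by
            rw [deriv_fun_sub (daA x hx') differentiableAt_fun_id]
            simp
          rw [h2]; linarith
      intro t ht
      exact hmo self_mem_Ici ht ht.out
    have hbound : ∀ t ∈ Ioi s, Real.exp (-(a t)) ≤ Real.exp (s - a s) * Real.exp (-t) := by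
      intro t ht
      rw [← Real.exp_add]
      apply Real.exp_le_exp.2
      have := hmono t (Set.mem_Ici.2 (le_of_lt ht))
      linarith
    apply Integrable.mono' (g := fun t => Real.exp (s - a s) * Real.exp (-t))
    · exact ((exp_neg_integrableOn_Ioi s one_pos).congr_fun
        (fun t _ => by rw [neg_one_mul]) measurableSet_Ioi).const_mul _
    · exact ((Real.continuous_exp.comp_continuousOn
        ((contA.mono (fun x hx => lt_trans hs hx)).neg)).aestronglyMeasurable measurableSet_Ioi)
    · filter_upwards [self_mem_ae_restrict measurableSet_Ioi] with t ht
      rw [Real.norm_eq_abs, abs_of_pos (Real.exp_pos _)]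
      exact hbound t ht
  -- integrability of deriv (aseq n) * exp(-a)
  have intD : ∀ n ≤ 3, ∀ s ∈ Ioi S₀,
      IntegrableOn (fun t => deriv (aseq a n) t * Real.exp (-(a t))) (Ioi s) := by
    intro n hn s hs
    apply Integrable.mono' (hint n (by omega) s (lt_trans hS₀pos hs))
    · exact ((((cder n hn).mono (fun x hx => lt_trans hs hx)).mul
        (Real.continuous_exp.comp_continuousOn
          ((contA.mono (fun x hx => lt_trans hs hx)).neg))).aestronglyMeasurable
          measurableSet_Ioi)
    · filter_upwards [self_mem_ae_restrict measurableSet_Ioi] with t ht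
      rw [Real.norm_eq_abs, abs_mul, abs_of_pos (Real.exp_pos _)]
  -- integration by parts identities
  have hIBP : ∀ n ≤ 2, ∀ s ∈ Ioi S₀,
      (∫ t in Ioi s, deriv (aseq a n) t * Real.exp (-(a t)))
        = aseq a (n+1) s * Real.exp (-(a s))
          + ∫ t in Ioi s, deriv (aseq a (n+1)) t * Real.exp (-(a t)) := by
    intro n hn s hs
    have key : (∫ t in Ioi s, (deriv (aseq a (n+1)) t * Real.exp (-(a t))
        - deriv (aseq a n) t * Real.exp (-(a t))))
        = 0 - aseq a (n+1) s * Real.exp (-(a s)) := by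
      apply integral_Ioi_of_hasDerivAt_of_tendsto
      · exact (hprod (n+1) (by omega) s hs).continuousAt.continuousWithinAt
      · intro x hx
        have hx' : x ∈ Ioi S₀ := Set.mem_Ioi.2 (lt_trans hs hx)
        have := hprod (n+1) (by omega) x hx'
        rw [hmulS n x hx'] at this
        exact this.congr_deriv (by beta_reduce; ring)
      · exact (intD (n+1) (by omega) s hs).sub (intD n (by omega) s hs)
      · exact hdecay (n+1) (by omega)
    rw [integral_sub (intD (n+1) (by omega) s hs) (intD n (by omega) s hs)] at key
    linarith
  have hIBP0 : ∀ s ∈ Ioi S₀,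
      (∫ t in Ioi s, Real.exp (-(a t)))
        = aseq a 0 s * Real.exp (-(a s))
          + ∫ t in Ioi s, deriv (aseq a 0) t * Real.exp (-(a t)) := by
    intro s hs
    have key : (∫ t in Ioi s, (deriv (aseq a 0) t * Real.exp (-(a t))
        - Real.exp (-(a t))))
        = 0 - aseq a 0 s * Real.exp (-(a s)) := by
      apply integral_Ioi_of_hasDerivAt_of_tendsto
      · exact (hprod 0 (by omega) s hs).continuousAt.continuousWithinAt
      · intro x hx
        have hx' : x ∈ Ioi S₀ := Set.mem_Ioi.2 (lt_trans hs hx)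
        have := hprod 0 (by omega) x hx'
        rw [hmul0 x hx'] at this
        exact this.congr_deriv (by beta_reduce; ring)
      · exact (intD 0 (by omega) s hs).sub (intExp s hs)
      · exact hdecay 0 (by omega)
    rw [integral_sub (intD 0 (by omega) s hs) (intExp s hs)] at key
    linarith
  have hFfull : ∀ s ∈ Ioi S₀,
      (∫ t in Ioi s, Real.exp (-(a t)))
        = (aseq a 0 s + aseq a 1 s + aseq a 2 s + aseq a 3 s) * Real.exp (-(a s))
          + ∫ t in Ioi s, deriv (aseq a 3) t * Real.exp (-(a t)) := by
    intro s hs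
    rw [hIBP0 s hs, hIBP 0 (by omega) s hs, hIBP 1 (by omega) s hs, hIBP 2 (by omega) s hs]
    ring
  -- sign threshold
  obtain ⟨s₁, hs₁pos, hs₁⟩ := hne 3 (by omega)
  set S₁ : ℝ := max (S₀ + 1) s₁ with hS₁def
  have hS₁gt : S₀ < S₁ := lt_of_lt_of_le (by linarith) (le_max_left _ _)
  have hS₁mem : ∀ s, S₁ ≤ s → s ∈ Ioi S₀ := fun s hs => lt_of_lt_of_le hS₁gt hs
  have hne3 : ∀ s, S₁ ≤ s → aseq a 3 s ≠ 0 := fun s hs =>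
    hs₁ s (le_trans (le_max_right _ _) hs)
  have hsgn : (∀ t, S₁ ≤ t → 0 < aseq a 3 t) ∨ (∀ t, S₁ ≤ t → aseq a 3 t < 0) := by
    by_contra hcon
    push_neg at hcon
    obtain ⟨⟨t₁, ht₁, ht₁'⟩, ⟨t₂, ht₂, ht₂'⟩⟩ := hcon
    have hsub : uIcc t₁ t₂ ⊆ Ici S₁ := by
      intro x hx
      rcases Set.mem_uIcc.1 hx with ⟨h1, _⟩ | ⟨h1, _⟩
      · exact le_trans ht₁ h1
      · exact le_trans ht₂ h1
    have hc : ContinuousOn (aseq a 3) (uIcc t₁ t₂) :=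
      (ca3.continuousOn).mono (fun x hx => hS₁mem x (hsub hx))
    have h0 : (0:ℝ) ∈ uIcc (aseq a 3 t₁) (aseq a 3 t₂) :=
      Set.mem_uIcc.2 (Or.inl ⟨ht₁', ht₂'⟩)
    obtain ⟨t, htmem, htz⟩ := intermediate_value_uIcc hc h0
    exact hne3 t (hsub htmem) htz
  -- key quantitative bound
  have hkey : ∀ ε : ℝ, 0 < ε → ε ≤ 1/2 → ∃ S₂, S₁ ≤ S₂ ∧ ∀ s, S₂ ≤ s →
      |∫ t in Ioi s, deriv (aseq a 3) t * Real.exp (-(a t))|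
        ≤ 2 * ε * (|aseq a 3 s| * Real.exp (-(a s))) := by
    intro ε hε hε2
    obtain ⟨T, hT⟩ := eventually_atTop.1
      ((Metric.tendsto_nhds.1 (hratio 3 (by omega))) ε hε)
    refine ⟨max S₁ T, le_max_left _ _, fun s hs => ?_⟩
    have hsS₁ : S₁ ≤ s := le_trans (le_max_left _ _) hs
    have hsU : s ∈ Ioi S₀ := hS₁mem s hsS₁
    have hptw : ∀ t, t ∈ Ioi s → |deriv (aseq a 3) t| ≤ ε * |deriv (aseq a 2) t| := by
      intro t ht
      have htS₁ : S₁ ≤ t := le_trans hsS₁ (le_of_lt ht)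
      have htU : t ∈ Ioi S₀ := hS₁mem t htS₁
      have h4le : |aseq a 4 t| ≤ ε * |aseq a 3 t| := by
        have := hT t (le_trans (le_trans (le_max_right _ _) hs) (le_of_lt ht))
        rw [Real.dist_eq, sub_zero, abs_div] at this
        have h3ne : |aseq a 3 t| ≠ 0 := fun h => hne3 t htS₁ (abs_eq_zero.1 h)
        have h3pos : 0 < |aseq a 3 t| := lt_of_le_of_ne (abs_nonneg _) (Ne.symm h3ne)
        rw [div_lt_iff₀ h3pos] at this
        nlinarith
      calc |deriv (aseq a 3) t| = |aseq a 4 t| * deriv a t := by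
            rw [← hmulS 3 t htU, abs_mul, abs_of_pos (ha'pos t htU)]
        _ ≤ (ε * |aseq a 3 t|) * deriv a t := by
            apply mul_le_mul_of_nonneg_right h4le (le_of_lt (ha'pos t htU))
        _ = ε * |deriv (aseq a 2) t| := by
            rw [← hmulS 2 t htU, abs_mul, abs_of_pos (ha'pos t htU)]; ring
    have h1 : |∫ t in Ioi s, deriv (aseq a 3) t * Real.exp (-(a t))|
        ≤ ∫ t in Ioi s, |deriv (aseq a 3) t| * Real.exp (-(a t)) := by
      have heq : (fun t => ‖deriv (aseq a 3) t * Real.exp (-(a t))‖)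
          = fun t => |deriv (aseq a 3) t| * Real.exp (-(a t)) := by
        funext t
        rw [Real.norm_eq_abs, abs_mul, abs_of_pos (Real.exp_pos _)]
      have := norm_integral_le_integral_norm
        (μ := volume.restrict (Ioi s)) (fun t => deriv (aseq a 3) t * Real.exp (-(a t)))
      rw [Real.norm_eq_abs] at this
      rwa [heq] at this
    have h2 : (∫ t in Ioi s, |deriv (aseq a 3) t| * Real.exp (-(a t)))
        ≤ ε * ∫ t in Ioi s, |deriv (aseq a 2) t| * Real.exp (-(a t)) := by
      rw [← integral_const_mul]
      apply setIntegral_mono_on (hint 3 (by omega) s (lt_trans hS₀pos hsU))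
        (((hint 2 (by omega) s (lt_trans hS₀pos hsU))).const_mul ε) measurableSet_Ioi
      intro t ht
      have : ε * (|deriv (aseq a 2) t| * Real.exp (-(a t)))
          = (ε * |deriv (aseq a 2) t|) * Real.exp (-(a t)) := by ring
      rw [this]
      exact mul_le_mul_of_nonneg_right (hptw t ht) (le_of_lt (Real.exp_pos _))
    have h3 : (∫ t in Ioi s, |deriv (aseq a 2) t| * Real.exp (-(a t)))
        ≤ |aseq a 3 s| * Real.exp (-(a s))
          + |∫ t in Ioi s, deriv (aseq a 3) t * Real.exp (-(a t))| := by
      rcases hsgn with hpos | hneg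
      · have heq : EqOn (fun t => |deriv (aseq a 2) t| * Real.exp (-(a t)))
            (fun t => deriv (aseq a 2) t * Real.exp (-(a t))) (Ioi s) := by
          intro t ht
          have htS₁ : S₁ ≤ t := le_trans hsS₁ (le_of_lt ht)
          have htU : t ∈ Ioi S₀ := hS₁mem t htS₁
          have : 0 < deriv (aseq a 2) t := by
            rw [← hmulS 2 t htU]
            exact mul_pos (hpos t htS₁) (ha'pos t htU)
          simp only [abs_of_pos this]
        rw [setIntegral_congr_fun measurableSet_Ioi heq, hIBP 2 (by omega) s hsU,
          abs_of_pos (hpos s hsS₁)]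
        have := le_abs_self (∫ t in Ioi s, deriv (aseq a 3) t * Real.exp (-(a t)))
        linarith
      · have heq : EqOn (fun t => |deriv (aseq a 2) t| * Real.exp (-(a t)))
            (fun t => -(deriv (aseq a 2) t * Real.exp (-(a t)))) (Ioi s) := by
          intro t ht
          have htS₁ : S₁ ≤ t := le_trans hsS₁ (le_of_lt ht)
          have htU : t ∈ Ioi S₀ := hS₁mem t htS₁
          have : deriv (aseq a 2) t < 0 := by
            rw [← hmulS 2 t htU]
            exact mul_neg_of_neg_of_pos (hneg t htS₁) (ha'pos t htU)
          simp only [abs_of_neg this]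
          ring
        rw [setIntegral_congr_fun measurableSet_Ioi heq, integral_neg,
          hIBP 2 (by omega) s hsU, abs_of_neg (hneg s hsS₁)]
        have := neg_abs_le (∫ t in Ioi s, deriv (aseq a 3) t * Real.exp (-(a t)))
        linarith
    have hXnn : 0 ≤ |aseq a 3 s| * Real.exp (-(a s)) :=
      mul_nonneg (abs_nonneg _) (le_of_lt (Real.exp_pos _))
    nlinarith [abs_nonneg (∫ t in Ioi s, deriv (aseq a 3) t * Real.exp (-(a t)))]
  -- Part (i)
  have hlim0 : Tendsto (fun s => (∫ t in Ioi s, deriv (aseq a 3) t * Real.exp (-(a t)))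
      * Real.exp (a s) / aseq a 3 s) atTop (nhds 0) := by
    rw [NormedAddCommGroup.tendsto_nhds_zero]
    intro ε hε
    have hε' : 0 < min (ε/3) (1/2) := lt_min (by linarith) (by norm_num)
    obtain ⟨S₂, hS₂S₁, hbd⟩ := hkey (min (ε/3) (1/2)) hε' (min_le_right _ _)
    filter_upwards [eventually_ge_atTop S₂] with s hs
    have hsS₁ : S₁ ≤ s := le_trans hS₂S₁ hs
    have hsU : s ∈ Ioi S₀ := hS₁mem s hsS₁
    have h3pos : 0 < |aseq a 3 s| :=
      lt_of_le_of_ne (abs_nonneg _) (fun h => hne3 s hsS₁ (abs_eq_zero.1 h.symm))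
    have hexp : Real.exp (-(a s)) * Real.exp (a s) = 1 := by
      rw [← Real.exp_add]; simp
    have hbd' := hbd s hs
    have hnum : |(∫ t in Ioi s, deriv (aseq a 3) t * Real.exp (-(a t))) * Real.exp (a s)|
        ≤ 2 * min (ε/3) (1/2) * |aseq a 3 s| := by
      rw [abs_mul, abs_of_pos (Real.exp_pos _)]
      have h2 := mul_le_mul_of_nonneg_right hbd' (le_of_lt (Real.exp_pos (a s)))
      have h3 : 2 * min (ε/3) (1/2) * (|aseq a 3 s| * Real.exp (-(a s))) * Real.exp (a s)
          = 2 * min (ε/3) (1/2) * |aseq a 3 s| * (Real.exp (-(a s)) * Real.exp (a s)) := by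
        ring
      rw [h3, hexp, mul_one] at h2
      exact h2
    rw [Real.norm_eq_abs, abs_div]
    rw [div_lt_iff₀ h3pos]
    have : 2 * min (ε/3) (1/2) * |aseq a 3 s| < ε * |aseq a 3 s| := by
      have h1 : min (ε/3) (1/2) ≤ ε/3 := min_le_left _ _
      nlinarith
    linarith
  have heq1 : ∀ᶠ s in atTop, 1 + (∫ t in Ioi s, deriv (aseq a 3) t * Real.exp (-(a t)))
        * Real.exp (a s) / aseq a 3 s
      = ((∫ t in Ioi s, Real.exp (-(a t))) * Real.exp (a s)
        - aseq a 0 s - aseq a 1 s - aseq a 2 s) / aseq a 3 s := by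
    filter_upwards [eventually_ge_atTop S₁] with s hs
    have hsU : s ∈ Ioi S₀ := hS₁mem s hs
    have hexp : Real.exp (-(a s)) * Real.exp (a s) = 1 := by
      rw [← Real.exp_add]; simp
    rw [hFfull s hsU]
    have hnum : ((aseq a 0 s + aseq a 1 s + aseq a 2 s + aseq a 3 s) * Real.exp (-(a s))
          + (∫ t in Ioi s, deriv (aseq a 3) t * Real.exp (-(a t)))) * Real.exp (a s)
          - aseq a 0 s - aseq a 1 s - aseq a 2 s
        = aseq a 3 s + (∫ t in Ioi s, deriv (aseq a 3) t * Real.exp (-(a t)))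
          * Real.exp (a s) := by
      calc ((aseq a 0 s + aseq a 1 s + aseq a 2 s + aseq a 3 s) * Real.exp (-(a s))
          + (∫ t in Ioi s, deriv (aseq a 3) t * Real.exp (-(a t)))) * Real.exp (a s)
          - aseq a 0 s - aseq a 1 s - aseq a 2 s
          = (aseq a 0 s + aseq a 1 s + aseq a 2 s + aseq a 3 s)
              * (Real.exp (-(a s)) * Real.exp (a s))
            + (∫ t in Ioi s, deriv (aseq a 3) t * Real.exp (-(a t))) * Real.exp (a s)
            - aseq a 0 s - aseq a 1 s - aseq a 2 s := by ring
        _ = _ := by rw [hexp]; ring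
    rw [hnum, add_div, div_self (hne3 s hs)]
  have hpart1 : Tendsto (fun s => ((∫ t in Set.Ioi s, Real.exp (-(a t))) * Real.exp (a s)
      - aseq a 0 s - aseq a 1 s - aseq a 2 s) / aseq a 3 s) atTop (nhds 1) := by
    have := (tendsto_const_nhds (x := (1:ℝ)) (f := atTop)).add hlim0
    rw [add_zero] at this
    exact this.congr' heq1
  -- Part (ii)
  have hcomp : ∀ n, n < 4 → ∀ δ : ℝ, 0 < δ → ∃ T, ∀ s, T ≤ s →
      |aseq a (n+1) s| ≤ δ * |aseq a n s| := by
    intro n hn δ hδ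
    obtain ⟨T₁, hT₁⟩ := eventually_atTop.1 ((Metric.tendsto_nhds.1 (hratio n hn)) δ hδ)
    obtain ⟨t₁, ht₁pos, ht₁⟩ := hne n hn
    refine ⟨max T₁ t₁, fun s hs => ?_⟩
    have h1 := hT₁ s (le_trans (le_max_left _ _) hs)
    rw [Real.dist_eq, sub_zero, abs_div] at h1
    have h2 : |aseq a n s| ≠ 0 := fun h =>
      ht₁ s (le_trans (le_max_right _ _) hs) (abs_eq_zero.1 h)
    have h3 : 0 < |aseq a n s| := lt_of_le_of_ne (abs_nonneg _) (Ne.symm h2)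
    rw [div_lt_iff₀ h3] at h1
    nlinarith
  obtain ⟨S₂, hS₂S₁, hS₂⟩ := hkey (1/2) (by norm_num) le_rfl
  obtain ⟨T₀, hT₀⟩ := hcomp 0 (by omega) (1/16) (by norm_num)
  obtain ⟨T₁, hT₁c⟩ := hcomp 1 (by omega) 1 one_pos
  obtain ⟨T₂, hT₂c⟩ := hcomp 2 (by omega) 1 one_pos
  refine ⟨hpart1, 8, by norm_num, max (max S₂ T₀) (max T₁ T₂), ?_, fun s hs => ?_⟩
  · have h1 : (0:ℝ) < S₂ := lt_of_lt_of_le (lt_trans hS₀pos hS₁gt) hS₂S₁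
    exact lt_of_lt_of_le h1 (le_trans (le_max_left S₂ T₀) (le_max_left _ _))
  · have hsS₂ : S₂ ≤ s := le_trans (le_trans (le_max_left _ _) (le_max_left _ _)) hs
    have hsT₀ : T₀ ≤ s := le_trans (le_trans (le_max_right _ _) (le_max_left _ _)) hs
    have hsT₁ : T₁ ≤ s := le_trans (le_trans (le_max_left _ _) (le_max_right _ _)) hs
    have hsT₂ : T₂ ≤ s := le_trans (le_trans (le_max_right _ _) (le_max_right _ _)) hs
    have hsS₁ : S₁ ≤ s := le_trans hS₂S₁ hsS₂
    have hsU : s ∈ Ioi S₀ := hS₁mem s hsS₁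
    have ha'p : 0 < deriv a s := ha'pos s hsU
    have hexp : Real.exp (-(a s)) * Real.exp (a s) = 1 := by
      rw [← Real.exp_add]; simp
    -- positivity of F
    have hFpos : 0 < ∫ t in Ioi s, Real.exp (-(a t)) := by
      rw [setIntegral_pos_iff_support_of_nonneg_ae
        (Filter.Eventually.of_forall (fun t => le_of_lt (Real.exp_pos _)))
        (intExp s hsU)]
      have hsup : Function.support (fun t => Real.exp (-(a t))) = Set.univ := by
        ext t; simp [Real.exp_ne_zero]
      rw [hsup, Set.univ_inter, Real.volume_Ioi]
      exact ENNReal.zero_lt_top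
    -- the remainder y
    set G3 := ∫ t in Ioi s, deriv (aseq a 3) t * Real.exp (-(a t)) with hG3def
    set y := (aseq a 1 s + aseq a 2 s + aseq a 3 s + G3 * Real.exp (a s)) * deriv a s
      with hydef
    have hxy : (∫ t in Ioi s, Real.exp (-(a t))) * Real.exp (a s) * deriv a s = 1 + y := by
      rw [hFfull s hsU]
      calc ((aseq a 0 s + aseq a 1 s + aseq a 2 s + aseq a 3 s) * Real.exp (-(a s)) + G3)
            * Real.exp (a s) * deriv a s
          = (aseq a 0 s * deriv a s) * (Real.exp (-(a s)) * Real.exp (a s))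
            + ((aseq a 1 s + aseq a 2 s + aseq a 3 s)
                * (Real.exp (-(a s)) * Real.exp (a s))
              + G3 * Real.exp (a s)) * deriv a s := by ring
        _ = 1 + y := by rw [hexp, hmul0 s hsU, hydef]; ring
    -- bounds
    have hG3' : |G3 * Real.exp (a s)| ≤ |aseq a 3 s| := by
      have h2 := mul_le_mul_of_nonneg_right (hS₂ s hsS₂) (le_of_lt (Real.exp_pos (a s)))
      have h3 : 2 * (1/2) * (|aseq a 3 s| * Real.exp (-(a s))) * Real.exp (a s)
          = |aseq a 3 s| * (Real.exp (-(a s)) * Real.exp (a s)) := by ring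
      rw [h3, hexp, mul_one] at h2
      rw [abs_mul, abs_of_pos (Real.exp_pos _)]
      exact h2
    have h21 : |aseq a 2 s| ≤ |aseq a 1 s| := by
      have := hT₁c s hsT₁; linarith
    have h32 : |aseq a 3 s| ≤ |aseq a 2 s| := by
      have := hT₂c s hsT₂; linarith
    have h10 : |aseq a 1 s| ≤ (1/16) * |aseq a 0 s| := hT₀ s hsT₀
    have hy4 : |y| ≤ 4 * (|aseq a 1 s| * deriv a s) := by
      rw [hydef, abs_mul, abs_of_pos ha'p]
      have habs : |aseq a 1 s + aseq a 2 s + aseq a 3 s + G3 * Real.exp (a s)|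
          ≤ |aseq a 1 s| + |aseq a 2 s| + |aseq a 3 s| + |G3 * Real.exp (a s)| :=
        (abs_add_le _ _).trans (add_le_add_left
          ((abs_add_le _ _).trans (add_le_add_left (abs_add_le _ _) _)) _)
      have hsum : |aseq a 1 s + aseq a 2 s + aseq a 3 s + G3 * Real.exp (a s)|
          ≤ 4 * |aseq a 1 s| := by linarith
      calc |aseq a 1 s + aseq a 2 s + aseq a 3 s + G3 * Real.exp (a s)| * deriv a s
          ≤ 4 * |aseq a 1 s| * deriv a s :=
            mul_le_mul_of_nonneg_right hsum (le_of_lt ha'p)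
        _ = 4 * (|aseq a 1 s| * deriv a s) := by ring
    have ha0abs : |aseq a 0 s| * deriv a s = 1 := by
      have h0pos : 0 < aseq a 0 s := by
        have : aseq a 0 s = 1 / deriv a s := rfl
        rw [this]; positivity
      rw [abs_of_pos h0pos]
      exact hmul0 s hsU
    have hysmall : |y| ≤ 1/2 := by
      have h1 : |aseq a 1 s| * deriv a s ≤ (1/16) * (|aseq a 0 s| * deriv a s) := by
        have := mul_le_mul_of_nonneg_right h10 (le_of_lt ha'p)
        linarith [this]
      rw [ha0abs] at h1
      linarith
    -- derivative computation
    have hd0 : deriv (aseq a 0) s = -(deriv (deriv a) s / deriv a s ^ 2) := by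
      have hAt : HasDerivAt (fun u => 1 / deriv a u)
          (-(deriv (deriv a) s / deriv a s ^ 2)) s := by
        have h := (daA' s hsU).hasDerivAt
        have := (hasDerivAt_const s (1:ℝ)).div h (ha'ne s hsU)
        exact this.congr_deriv (by ring)
      exact hAt.deriv
    have hderivcalc : |aseq a 1 s| * deriv a s = |deriv (deriv a) s| / deriv a s ^ 2 := by
      have h1 : |aseq a 1 s| * deriv a s = |aseq a 1 s * deriv a s| := by
        rw [abs_mul, abs_of_pos ha'p]
      rw [h1, hmulS 0 s hsU, hd0, abs_neg, abs_div, abs_of_pos (by positivity : (0:ℝ) < deriv a s ^ 2)]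
    -- logarithm identity
    have h1y : (0:ℝ) < 1 + y := by
      have := abs_le.1 hysmall
      linarith [this.1]
    have hlog1 : Real.log (∫ t in Ioi s, Real.exp (-(a t))) + a s + Real.log (deriv a s)
        = Real.log (1 + y) := by
      rw [← hxy, Real.log_mul (by positivity) (ne_of_gt ha'p),
        Real.log_mul (ne_of_gt hFpos) (Real.exp_ne_zero _), Real.log_exp]
    have hlogbound : |Real.log (1 + y)| ≤ 2 * |y| := abs_log_one_add_le hysmall
    rw [hlog1]
    calc |Real.log (1 + y)| ≤ 2 * |y| := hlogbound
      _ ≤ 2 * (4 * (|aseq a 1 s| * deriv a s)) := by linarith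
      _ = 8 * (|deriv (deriv a) s| / deriv a s ^ 2) := by rw [hderivcalc]; ring
      _ = 8 * |deriv (deriv a) s| / deriv a s ^ 2 := by ring
end
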